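/- Let B, G be finite subsets of ℝ/ℤ with |B| = |G| = n, and R̃ ⊆ ℝ/ℤ with |R̃| < (3/2)n and B + G ⊆ −R̃. Then there exists k < (3/2)n and a finite cyclic subgroup H of ℝ/ℤ of order k such that B and G are each contained in cosets of H. -/

import Mathlib

open Pointwise

section AuxCombinatorics

open Finset

variable {α : Type*} [AddCommGroup α] [DecidableEq α]

lemma card_add_single (A : Finset α) (c : α) : (A + {c}).card = A.card := by
  rw [add_comm, singleton_add, card_vadd_finset]

lemma mem_add_single {A : Finset α} {c x : α} : x ∈ A + {c} ↔ ∃ b ∈ A, b + c = x := by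
  simp [mem_add]

lemma aux_inter (A C : Finset α) {n m : ℕ} (hA : A.card = n)
    (hm : (A + C).card ≤ m) {c c' : α} (hc : c ∈ C) (hc' : c' ∈ C) :
    2 * n ≤ m + (A ∩ (A + {c - c'})).card := by
  have hX : A + {c} ⊆ A + C := add_subset_add_left (singleton_subset_iff.2 hc)
  have hY : A + {c'} ⊆ A + C := add_subset_add_left (singleton_subset_iff.2 hc')
  have hcX : (A + {c}).card = n := by rw [card_add_single, hA]
  have hcY : (A + {c'}).card = n := by rw [card_add_single, hA]
  have hXY : (A + {c}) ∩ (A + {c'}) = (A ∩ (A + {c - c'})) + {c'} := by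
    ext x
    simp only [mem_inter, mem_add_single]
    constructor
    · rintro ⟨⟨b1, hb1, rfl⟩, ⟨b2, hb2, hx⟩⟩
      refine ⟨b2, ⟨hb2, ⟨b1, hb1, ?_⟩⟩, hx⟩
      rw [← sub_eq_iff_eq_add'] at hx
      rw [← hx]; abel
    · rintro ⟨y, ⟨hyA, ⟨b, hb, rfl⟩⟩, rfl⟩
      exact ⟨⟨b, hb, by abel⟩, ⟨b + (c - c'), hyA, rfl⟩⟩
  have h1 : ((A + {c}) ∪ (A + {c'})).card ≤ m :=
    le_trans (card_le_card (union_subset hX hY)) hm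
  have h2 := card_union_add_card_inter (A + {c}) (A + {c'})
  have h3 : ((A + {c}) ∩ (A + {c'})).card = (A ∩ (A + {c - c'})).card := by
    rw [hXY, card_add_single]
  omega

lemma main_aux (B G : Finset α) {n m : ℕ} (hn : 0 < n) (hB : B.card = n) (hG : G.card = n)
    (hm : (B + G).card = m) (h32 : 2 * m < 3 * n) :
    ∃ S : Finset α, S.card ≤ m ∧ (0:α) ∈ S ∧ (∀ x ∈ S, -x ∈ S) ∧
      (∀ x ∈ S, ∀ y ∈ S, x + y ∈ S) ∧
      (∃ b ∈ B, ∀ x ∈ B, x - b ∈ S) ∧ (∃ g ∈ G, ∀ x ∈ G, x - g ∈ S) := by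
  obtain ⟨g0, hg0⟩ : G.Nonempty := card_pos.1 (hG ▸ hn)
  obtain ⟨b0, hb0⟩ : B.Nonempty := card_pos.1 (hB ▸ hn)
  have hm2 : m < 2 * n := by omega
  have hmle : (B + G).card ≤ m := hm.le
  have hmle' : (G + B).card ≤ m := by rwa [add_comm]
  have keyB : ∀ h ∈ G - G, 2 * n ≤ m + (B ∩ (B + {h})).card := by
    intro h hh
    obtain ⟨c, hc, c', hc', rfl⟩ := mem_sub.1 hh
    exact aux_inter B G hB hmle hc hc'
  have keyG : ∀ d ∈ B - B, 2 * n ≤ m + (G ∩ (G + {d})).card := by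
    intro d hd
    obtain ⟨c, hc, c', hc', rfl⟩ := mem_sub.1 hd
    exact aux_inter G B hG hmle' hc hc'
  set S := G - G with hS
  have hSBB : B - B = S := by
    ext d
    constructor
    · intro hd
      have := keyG d hd
      have hne : (G ∩ (G + {d})).Nonempty := card_pos.1 (by omega)
      obtain ⟨x, hx⟩ := hne
      rw [mem_inter] at hx
      obtain ⟨g, hg, hgx⟩ := mem_add_single.1 hx.2
      exact mem_sub.2 ⟨x, hx.1, g, hg, by rw [← hgx]; abel⟩
    · intro hd
      have := keyB d hd
      have hne : (B ∩ (B + {d})).Nonempty := card_pos.1 (by omega)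
      obtain ⟨x, hx⟩ := hne
      rw [mem_inter] at hx
      obtain ⟨b, hb, hbx⟩ := mem_add_single.1 hx.2
      exact mem_sub.2 ⟨x, hx.1, b, hb, by rw [← hbx]; abel⟩
  have hzero : (0:α) ∈ S := mem_sub.2 ⟨g0, hg0, g0, hg0, sub_self g0⟩
  have hneg : ∀ x ∈ S, -x ∈ S := by
    intro x hx
    obtain ⟨c, hc, c', hc', rfl⟩ := mem_sub.1 hx
    exact mem_sub.2 ⟨c', hc', c, hc, by abel⟩
  have hadd : ∀ x ∈ S, ∀ y ∈ S, x + y ∈ S := by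
    intro h1 hh1 h2 hh2
    have k1 := keyB h1 hh1
    have k2 := keyB h2 hh2
    set X1 := B ∩ (B + {h1}) with hX1
    set X2 := (B ∩ (B + {h2})) + {h1} with hX2
    have hX1sub : X1 ⊆ B + {h1} := inter_subset_right
    have hX2sub : X2 ⊆ B + {h1} := add_subset_add_right inter_subset_left
    have hcX2 : X2.card = (B ∩ (B + {h2})).card := card_add_single _ _
    have hcB1 : (B + {h1}).card = n := by rw [card_add_single, hB]
    have hu : (X1 ∪ X2).card ≤ n := hcB1 ▸ card_le_card (union_subset hX1sub hX2sub)
    have hi := card_union_add_card_inter X1 X2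
    have hne : (X1 ∩ X2).Nonempty := card_pos.1 (by omega)
    obtain ⟨x, hx⟩ := hne
    rw [mem_inter] at hx
    have hxB : x ∈ B := (mem_inter.1 hx.1).1
    obtain ⟨y, hy, hyx⟩ := mem_add_single.1 hx.2
    obtain ⟨b, hb, hby⟩ := mem_add_single.1 (mem_inter.1 hy).2
    rw [← hSBB]
    refine mem_sub.2 ⟨x, hxB, b, hb, ?_⟩
    rw [← hyx, ← hby]; abel
  have hcount : S.card * (2 * n) ≤ S.card * m + n * n := by
    have hfib : ∀ p ∈ B ×ˢ B, p.1 - p.2 ∈ S := by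
      intro p hp
      rw [mem_product] at hp
      rw [← hSBB]
      exact mem_sub.2 ⟨p.1, hp.1, p.2, hp.2, rfl⟩
    have htot : (B ×ˢ B).card = ∑ h ∈ S, ((B ×ˢ B).filter (fun p => p.1 - p.2 = h)).card :=
      card_eq_sum_card_fiberwise hfib
    have hlb : ∀ h ∈ S, (B ∩ (B + {h})).card ≤
        ((B ×ˢ B).filter (fun p => p.1 - p.2 = h)).card := by
      intro h hh
      apply card_le_card_of_injOn (fun x => (x, x - h))
      · intro x hx
        rw [mem_coe, mem_inter] at hx
        obtain ⟨b, hb, hbx⟩ := mem_add_single.1 hx.2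
        rw [mem_coe, mem_filter, mem_product]
        refine ⟨⟨hx.1, ?_⟩, sub_sub_cancel x h⟩
        have : x - h = b := by rw [← hbx]; abel
        show x - h ∈ B
        rw [this]; exact hb
      · intro a _ b _ hab
        exact (Prod.mk.injEq _ _ _ _ ▸ hab).1
    calc S.card * (2 * n) = ∑ _h ∈ S, 2 * n := by rw [sum_const, smul_eq_mul]
      _ ≤ ∑ h ∈ S, (m + (B ∩ (B + {h})).card) := sum_le_sum keyB
      _ = S.card * m + ∑ h ∈ S, (B ∩ (B + {h})).card := by
          rw [sum_add_distrib, sum_const, smul_eq_mul]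
      _ ≤ S.card * m + ∑ h ∈ S, ((B ×ˢ B).filter (fun p => p.1 - p.2 = h)).card := by
          gcongr with h hh; exact hlb h hh
      _ = S.card * m + (B ×ˢ B).card := by rw [← htot]
      _ = S.card * m + n * n := by rw [card_product, hB]
  have hSlt : S.card < 2 * n := by
    by_contra hcon
    push_neg at hcon
    nlinarith [hcount, h32, hcon, hn]
  have hcoset : ∀ t ∈ S, b0 + g0 + t ∈ B + G := by
    intro t ht
    set U := B.image (fun x => x - b0) with hU
    set V := G.image (fun g => t + g0 - g) with hV
    have hUS : U ⊆ S := by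
      intro x hx
      obtain ⟨b, hb, rfl⟩ := mem_image.1 hx
      rw [← hSBB]
      exact mem_sub.2 ⟨b, hb, b0, hb0, rfl⟩
    have hVS : V ⊆ S := by
      intro x hx
      obtain ⟨g, hg, rfl⟩ := mem_image.1 hx
      have h1 : g0 - g ∈ S := mem_sub.2 ⟨g0, hg0, g, hg, rfl⟩
      have h2 := hadd t ht _ h1
      have : t + g0 - g = t + (g0 - g) := by abel
      rw [this]; exact h2
    have hcU : U.card = n := by
      rw [hU, card_image_of_injective _ sub_left_injective, hB]
    have hcV : V.card = n := by
      rw [hV, card_image_of_injective, hG]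
      intro a b hab
      exact sub_right_injective hab
    have hu : (U ∪ V).card ≤ S.card := card_le_card (union_subset hUS hVS)
    have hi := card_union_add_card_inter U V
    have hne : (U ∩ V).Nonempty := card_pos.1 (by omega)
    obtain ⟨y, hy⟩ := hne
    rw [mem_inter] at hy
    obtain ⟨x, hxB, hxy⟩ := mem_image.1 hy.1
    obtain ⟨g, hgG, hgy⟩ := mem_image.1 hy.2
    refine mem_add.2 ⟨x, hxB, g, hgG, ?_⟩
    have : x - b0 = t + g0 - g := by rw [hxy, hgy]
    rw [sub_eq_iff_eq_add'] at this
    rw [this]; abel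
  have hSm : S.card ≤ m := by
    rw [← hm]
    apply card_le_card_of_injOn (fun t => b0 + g0 + t) hcoset
    intro a _ b _ hab
    exact add_left_cancel hab
  refine ⟨S, hSm, hzero, hneg, hadd, ⟨b0, hb0, ?_⟩, ⟨g0, hg0, ?_⟩⟩
  · intro x hx
    rw [← hSBB]
    exact mem_sub.2 ⟨x, hx, b0, hb0, rfl⟩
  · intro x hx
    exact mem_sub.2 ⟨x, hx, g0, hg0, rfl⟩

end AuxCombinatorics

lemma zmult_cyclic {β : Type*} [AddGroup β] (a : β) :
    IsAddCyclic (AddSubgroup.zmultiples a) := by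
  refine ⟨⟨a, AddSubgroup.mem_zmultiples a⟩, fun x => ?_⟩
  obtain ⟨k, hk⟩ := AddSubgroup.mem_zmultiples_iff.1 x.2
  exact ⟨k, Subtype.ext (by simpa using hk)⟩

lemma finite_sub_cyclic (H : AddSubgroup UnitAddCircle)
    (hfin : (H : Set UnitAddCircle).Finite) : IsAddCyclic H := by
  haveI : Finite H := hfin.to_subtype
  set N := Nat.card H with hN
  have hN0 : 0 < N := Nat.card_pos
  have hle : H ≤ AddSubgroup.zmultiples ((((N : ℝ))⁻¹ : ℝ) : UnitAddCircle) := by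
    intro u hu
    have h1 : N • (⟨u, hu⟩ : H) = 0 := card_nsmul_eq_zero'
    have h2 : N • u = 0 := by
      have := congrArg Subtype.val h1
      simpa using this
    obtain ⟨r, rfl⟩ := QuotientAddGroup.mk_surjective u
    have h3 : ((N • r : ℝ) : UnitAddCircle) = 0 := by
      rw [AddCircle.coe_nsmul]; exact h2
    rw [QuotientAddGroup.eq_zero_iff] at h3
    obtain ⟨z, hz⟩ := AddSubgroup.mem_zmultiples_iff.1 h3
    rw [AddSubgroup.mem_zmultiples_iff]
    refine ⟨z, ?_⟩
    rw [← AddCircle.coe_zsmul]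
    congr 1
    have hz' : (z : ℝ) = N * r := by
      simpa [zsmul_eq_mul, nsmul_eq_mul] using hz
    field_simp
    rw [zsmul_eq_mul, hz']; field_simp [Nat.cast_ne_zero.2 hN0.ne']
  haveI := zmult_cyclic ((((N : ℝ))⁻¹ : ℝ) : UnitAddCircle)
  exact AddSubgroup.isAddCyclic_of_le hle

/-- Let `B, G` be finite subsets of `ℝ/ℤ` with `|B| = |G| = n`, and `R̃ ⊆ ℝ/ℤ` finite
with `|R̃| < (3/2)n` and `B + G ⊆ -R̃`. Then there exist `k < (3/2)n` and a finite cyclic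
subgroup `H` of `ℝ/ℤ` of order `k` such that `B` and `G` are each contained in cosets of
`H`. -/
theorem stmt_16 (n : ℕ) (hn : 0 < n) (B G R : Set UnitAddCircle)
    (hfinB : B.Finite) (hfinG : G.Finite) (hfinR : R.Finite)
    (hB : B.ncard = n) (hG : G.ncard = n) (hR : 2 * R.ncard < 3 * n)
    (hsub : B + G ⊆ -R) :
    ∃ (k : ℕ) (H : AddSubgroup UnitAddCircle), 2 * k < 3 * n ∧
      (H : Set UnitAddCircle).ncard = k ∧ IsAddCyclic H ∧
      (∃ b : UnitAddCircle, B ⊆ {b} + (H : Set UnitAddCircle)) ∧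
      (∃ g : UnitAddCircle, G ⊆ {g} + (H : Set UnitAddCircle)) := by
  classical
  set Bf := hfinB.toFinset with hBfdef
  set Gf := hfinG.toFinset with hGfdef
  have hBf : Bf.card = n := by rw [← hB, Set.ncard_eq_toFinset_card _ hfinB]
  have hGf : Gf.card = n := by rw [← hG, Set.ncard_eq_toFinset_card _ hfinG]
  have hcoe : ((Bf + Gf : Finset UnitAddCircle) : Set UnitAddCircle) = B + G := by
    rw [Finset.coe_add, Set.Finite.coe_toFinset, Set.Finite.coe_toFinset]
  have hmdef : (Bf + Gf).card = (B + G).ncard := by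
    rw [← Set.ncard_coe_finset, hcoe]
  have hnegR : (-R).ncard = R.ncard := by
    rw [← Set.image_neg_eq_neg]
    exact Set.ncard_image_of_injective _ neg_injective
  have hmR : (B + G).ncard ≤ R.ncard := by
    rw [← hnegR]
    exact Set.ncard_le_ncard hsub hfinR.neg
  have h32 : 2 * (Bf + Gf).card < 3 * n := by omega
  obtain ⟨S, hSm, hzero, hnegS, haddS, ⟨b0, hb0, hBS⟩, ⟨g0, hg0, hGS⟩⟩ :=
    main_aux Bf Gf hn hBf hGf rfl h32
  refine ⟨S.card, { carrier := ↑S, add_mem' := ?_, zero_mem' := ?_, neg_mem' := ?_ },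
    by omega, Set.ncard_coe_finset S, ?_, ⟨b0, ?_⟩, ⟨g0, ?_⟩⟩
  · intro a b ha hb
    exact_mod_cast haddS a (by exact_mod_cast ha) b (by exact_mod_cast hb)

  · exact_mod_cast hzero
  · intro a ha
    exact_mod_cast hnegS a (by exact_mod_cast ha)
  · exact finite_sub_cyclic _ (S.finite_toSet)
  · intro x hx
    have hx' : x ∈ Bf := hfinB.mem_toFinset.2 hx
    have : x - b0 ∈ S := hBS x hx'
    exact Set.mem_add.2 ⟨b0, rfl, x - b0, by exact_mod_cast this, by abel⟩
  · intro x hx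
    have hx' : x ∈ Gf := hfinG.mem_toFinset.2 hx
    have : x - g0 ∈ S := hGS x hx'
    exact Set.mem_add.2 ⟨g0, rfl, x - g0, by exact_mod_cast this, by abel⟩
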